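/- For every positive integer k, the number of partitions p(k) satisfies p(k) ≥ e^{2√k} for all sufficiently large k. -/

import Mathlib

open Finset

namespace PLB


def E (k M : ℕ) : Finset (Fin k → ℕ) :=
  (Fintype.piFinset fun _ => Finset.range (M+1)).filter (fun e => ∑ i, (i.1+1) * e i = M)

lemma mem_E {k M : ℕ} {e : Fin k → ℕ} : e ∈ E k M ↔ ∑ i, (i.1+1) * e i = M := by
  constructor
  · exact fun h => (Finset.mem_filter.1 h).2
  · intro h
    refine Finset.mem_filter.2 ⟨Fintype.mem_piFinset.2 fun i => Finset.mem_range.2 ?_, h⟩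
    have : e i ≤ (i.1+1) * e i := Nat.le_mul_of_pos_left _ i.1.succ_pos
    have h2 : (i.1+1) * e i ≤ M := h ▸ Finset.single_le_sum (f := fun i => (i.1+1) * e i)
      (fun _ _ => Nat.zero_le _) (Finset.mem_univ i)
    omega


lemma pow_add_le (b d k : ℕ) : (b+d)^(k+1) ≤ b^(k+1) + (k+1)*d*(b+d)^k := by
  induction k with
  | zero => simp
  | succ k ih =>
    have h1 : (b+d)^(k+2) = (b+d) * (b+d)^(k+1) := by ring
    have h2 : (b+d) * (b+d)^(k+1) ≤ (b+d) * (b^(k+1) + (k+1)*d*(b+d)^k) :=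
      Nat.mul_le_mul_left _ ih
    have h3 : (b+d) * (b^(k+1) + (k+1)*d*(b+d)^k)
        = b*b^(k+1) + d*b^(k+1) + (k+1)*d*((b+d)*(b+d)^k) := by ring
    have h4 : d*b^(k+1) ≤ d*(b+d)^(k+1) :=
      Nat.mul_le_mul_left _ (Nat.pow_le_pow_left (by omega) _)
    have h5 : (b+d)*(b+d)^k = (b+d)^(k+1) := by ring
    have h6 : b*b^(k+1) = b^(k+2) := by ring
    calc (b+d)^(k+2) ≤ b*b^(k+1) + d*b^(k+1) + (k+1)*d*((b+d)*(b+d)^k) := by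
          rw [h1, ← h3]; exact h2
      _ ≤ b^(k+2) + d*(b+d)^(k+1) + (k+1)*d*(b+d)^(k+1) := by rw [h5, h6]; omega
      _ = b^(k+2) + (k+2)*d*(b+d)^(k+1) := by ring

lemma telescope (p d : ℕ) : ∀ T A : ℕ, A ≤ d*(T+1) →
    A^(p+1) ≤ (p+1)*d*∑ t ∈ Finset.range (T+1), (A - d*t)^p := by
  intro T
  induction T with
  | zero =>
    intro A hA
    have hs : ∑ t ∈ Finset.range (0+1), (A - d*t)^p = A^p := by simp
    rw [hs]
    have h1 : A^(p+1) = A*A^p := by ring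
    rw [h1]
    have h2 : A ≤ (p+1)*d := by
      have : d*(0+1) = d := by ring
      rw [this] at hA
      calc A ≤ d := hA
        _ ≤ (p+1)*d := Nat.le_mul_of_pos_left _ (Nat.succ_pos p)
    calc A*A^p ≤ ((p+1)*d)*A^p := Nat.mul_le_mul_right _ h2
      _ = (p+1)*d*A^p := by ring
  | succ T ih =>
    intro A hA
    by_cases hc : A ≤ d*(T+1)
    · have h := ih A hc
      have hext : ∑ t ∈ Finset.range (T+1), (A - d*t)^p
          ≤ ∑ t ∈ Finset.range (T+2), (A - d*t)^p := by
        exact Finset.sum_le_sum_of_subset (Finset.range_subset_range.2 (by omega))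
      calc A^(p+1) ≤ (p+1)*d*∑ t ∈ Finset.range (T+1), (A - d*t)^p := h
        _ ≤ (p+1)*d*∑ t ∈ Finset.range (T+2), (A - d*t)^p := Nat.mul_le_mul_left _ hext
    · push_neg at hc
      have hA' : A - d ≤ d*(T+1) := by
        have hd : d*(T+1+1) = d*(T+1) + d := by ring
        rw [hd] at hA
        omega
      have ihA := ih (A - d) hA'
      have key : A^(p+1) ≤ (A-d)^(p+1) + (p+1)*d*A^p := by
        have hb : A - d + d = A := by
          have : d ≤ d*(T+1) := Nat.le_mul_of_pos_right _ (Nat.succ_pos T)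
          omega
        have := pow_add_le (A - d) d p
        rw [hb] at this
        exact this
      have hshift : ∑ t ∈ Finset.range (T+1), (A - d - d*t)^p
          = ∑ t ∈ Finset.range (T+1), (A - d*(t+1))^p := by
        refine Finset.sum_congr rfl fun t _ => ?_
        congr 1
        have : d*(t+1) = d + d*t := by ring
        omega
      have hre : ∑ t ∈ Finset.range (T+2), (A - d*t)^p
          = A^p + ∑ t ∈ Finset.range (T+1), (A - d*(t+1))^p := by
        rw [Finset.sum_range_succ']
        simp [Nat.add_comm]
      calc A^(p+1) ≤ (A-d)^(p+1) + (p+1)*d*A^p := key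
        _ ≤ (p+1)*d*(∑ t ∈ Finset.range (T+1), (A - d - d*t)^p) + (p+1)*d*A^p :=
            Nat.add_le_add_right ihA _
        _ = (p+1)*d*(A^p + ∑ t ∈ Finset.range (T+1), (A - d*(t+1))^p) := by
            rw [hshift]; ring
        _ = (p+1)*d*∑ t ∈ Finset.range (T+2), (A - d*t)^p := by rw [hre]

lemma rec_ineq (k M : ℕ) :
    ∑ t ∈ Finset.range (M/(k+1)+1), (E k (M - (k+1)*t)).card ≤ (E (k+1) M).card := by
  classical
  have hsub : ∀ t ∈ Finset.range (M/(k+1)+1),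
      (E k (M - (k+1)*t)).image (fun e => (Fin.snoc e t : Fin (k+1) → ℕ)) ⊆ E (k+1) M := by
    intro t ht
    intro x hx
    rcases Finset.mem_image.1 hx with ⟨e, he, rfl⟩
    have he' := mem_E.1 he
    have htle : (k+1)*t ≤ M := by
      have := Finset.mem_range.1 ht
      have : t ≤ M/(k+1) := by omega
      calc (k+1)*t ≤ (k+1)*(M/(k+1)) := by exact Nat.mul_le_mul_left _ this
        _ ≤ M := Nat.mul_div_le M (k+1)
    refine mem_E.2 ?_
    rw [Fin.sum_univ_castSucc]
    simp only [Fin.snoc_castSucc, Fin.snoc_last, Fin.val_last]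
    have : ∑ x : Fin k, ((x.castSucc : ℕ) + 1) * e x = ∑ i : Fin k, ((i:ℕ) + 1) * e i := by
      simp [Fin.coe_castSucc]
    omega
  calc ∑ t ∈ Finset.range (M/(k+1)+1), (E k (M - (k+1)*t)).card
      = ∑ t ∈ Finset.range (M/(k+1)+1), ((E k (M - (k+1)*t)).image (fun e => (Fin.snoc e t : Fin (k+1) → ℕ))).card := by
        refine Finset.sum_congr rfl fun t _ => ?_
        rw [Finset.card_image_of_injective]
        intro a b hab
        funext i
        have := congrFun hab i.castSucc
        simpa using this
    _ = ((Finset.range (M/(k+1)+1)).biUnion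
          (fun t => (E k (M - (k+1)*t)).image (fun e => (Fin.snoc e t : Fin (k+1) → ℕ)))).card := by
        rw [Finset.card_biUnion]
        intro a _ b _ hab
        simp only [Finset.disjoint_left]
        intro x hx hy
        rcases Finset.mem_image.1 hx with ⟨e, _, rfl⟩
        rcases Finset.mem_image.1 hy with ⟨e', _, h⟩
        have := congrFun h (Fin.last k)
        simp only [Fin.snoc_last] at this
        exact hab this.symm
    _ ≤ (E (k+1) M).card := by
        apply Finset.card_le_card
        intro x hx
        rcases Finset.mem_biUnion.1 hx with ⟨t, ht, hxt⟩
        exact hsub t ht hxt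

lemma cardB (k : ℕ) : ∀ M : ℕ, (M - (k+1))^k ≤
    k.factorial * (k+1).factorial * (E (k+1) M).card := by
  induction k with
  | zero =>
    intro M
    have hne : (fun _ => M : Fin 1 → ℕ) ∈ E 1 M := by
      refine mem_E.2 ?_
      simp
    have : 1 ≤ (E 1 M).card := Finset.card_pos.2 ⟨_, hne⟩
    simpa using this
  | succ k ih =>
    intro M
    have hAle : M - (k+1) ≤ (k+2)*(M/(k+2)+1) := by
      have h1 := Nat.div_add_mod M (k+2)
      have h2 : M % (k+2) < k+2 := Nat.mod_lt M (by omega)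
      have hexp : (k+2)*(M/(k+2)+1) = (k+2)*(M/(k+2)) + (k+2) := by ring
      omega
    have htel := telescope k (k+2) (M/(k+2)) (M - (k+1)) hAle
    have hterm : ∀ t ∈ Finset.range (M/(k+2)+1), (M - (k+1) - (k+2)*t)^k ≤
        k.factorial * (k+1).factorial * (E (k+1) (M - (k+2)*t)).card := by
      intro t _
      have heq : M - (k+1) - (k+2)*t = M - (k+2)*t - (k+1) := by omega
      rw [heq]
      exact ih (M - (k+2)*t)
    have hsum : ∑ t ∈ Finset.range (M/(k+2)+1), (M - (k+1) - (k+2)*t)^k ≤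
        k.factorial * (k+1).factorial * ∑ t ∈ Finset.range (M/(k+2)+1), (E (k+1) (M - (k+2)*t)).card := by
      rw [Finset.mul_sum]
      exact Finset.sum_le_sum hterm
    have hrec := rec_ineq (k+1) M
    have hmono : (M - (k+2))^(k+1) ≤ (M - (k+1))^(k+1) := Nat.pow_le_pow_left (by omega) _
    have hfac1 : (k+1).factorial = (k+1)*k.factorial := rfl
    have hfac2 : (k+2).factorial = (k+2)*(k+1).factorial := rfl
    calc (M - (k+2))^(k+1) ≤ (M - (k+1))^(k+1) := hmono
      _ ≤ (k+1)*(k+2)*∑ t ∈ Finset.range (M/(k+2)+1), (M - (k+1) - (k+2)*t)^k := htel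
      _ ≤ (k+1)*(k+2)*(k.factorial * (k+1).factorial *
            ∑ t ∈ Finset.range (M/(k+2)+1), (E (k+1) (M - (k+2)*t)).card) :=
          Nat.mul_le_mul_left _ hsum
      _ ≤ (k+1)*(k+2)*(k.factorial * (k+1).factorial * (E (k+2) M).card) := by
          refine Nat.mul_le_mul_left _ (Nat.mul_le_mul_left _ ?_)
          exact hrec
      _ = (k+1).factorial * (k+2).factorial * (E (k+2) M).card := by
          rw [hfac1, hfac2, hfac1]; ring




def S {k : ℕ} (f : Fin k → ℕ) (i : ℕ) : ℕ := ∑ j : Fin k, if i ≤ j.1 then f j else 0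

lemma S_top {k : ℕ} (f : Fin k → ℕ) : S f k = 0 := by
  apply Finset.sum_eq_zero
  intro j _
  rw [if_neg]
  omega

lemma S_step {k : ℕ} (f : Fin k → ℕ) (i : Fin k) : S f i.1 = f i + S f (i.1+1) := by
  unfold S
  have h : ∀ j : Fin k, (if i.1 ≤ j.1 then f j else 0)
      = (if j = i then f j else 0) + (if i.1+1 ≤ j.1 then f j else 0) := by
    intro j
    rcases eq_or_ne j i with rfl | hne
    · rw [if_pos (le_refl _), if_pos rfl, if_neg (by omega), add_zero]
    · have : i.1 ≠ j.1 := fun h => hne (Fin.ext h.symm)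
      rw [if_neg hne]
      by_cases hc : i.1+1 ≤ j.1
      · rw [if_pos (by omega), if_pos hc, zero_add]
      · rw [if_neg (by omega), if_neg hc]
  rw [Finset.sum_congr rfl (fun j _ => h j), Finset.sum_add_distrib,
    Finset.sum_ite_eq' Finset.univ i f]
  simp

lemma S_anti {k : ℕ} (f : Fin k → ℕ) {i i' : ℕ} (h : i ≤ i') : S f i' ≤ S f i := by
  apply Finset.sum_le_sum
  intro j _
  by_cases hc : i' ≤ j.1
  · rw [if_pos hc, if_pos (by omega)]
  · rw [if_neg hc]
    exact Nat.zero_le _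

lemma sum_S {k : ℕ} (f : Fin k → ℕ) : ∑ i : Fin k, S f i.1 = ∑ j : Fin k, (j.1+1) * f j := by
  unfold S
  rw [Finset.sum_comm]
  refine Finset.sum_congr rfl fun j _ => ?_
  rw [Finset.sum_ite, Finset.sum_const, Finset.sum_const_zero, add_zero]
  have : Finset.univ.filter (fun i : Fin k => i.1 ≤ j.1) = Finset.Iic j := by
    ext i
    rw [Finset.mem_filter, Finset.mem_Iic]
    simp only [Finset.mem_univ, true_and]
    exact (Fin.le_def).symm
  rw [this, Fin.card_Iic, smul_eq_mul]

def cpart {k : ℕ} (f : Fin k → ℕ) : Fin k → ℕ := fun i => S f i.1 + (k - i.1)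

def lpart {l : ℕ} (g : Fin l → ℕ) : Fin l → ℕ := fun i => S g i.1

lemma cpart_lt {k : ℕ} (f : Fin k → ℕ) {i j : Fin k} (h : i < j) : cpart f j < cpart f i := by
  unfold cpart
  have h1 : S f j.1 ≤ S f i.1 := S_anti f (le_of_lt h)
  have h2 : j.1 < k := j.2
  have h3 : i.1 < j.1 := h
  omega

lemma lpart_anti {l : ℕ} (g : Fin l → ℕ) {i j : Fin l} (h : i ≤ j) : lpart g j ≤ lpart g i :=
  S_anti g h

lemma funeq_of_map_eq {k : ℕ} {c c' : Fin k → ℕ}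
    (hc : ∀ i j : Fin k, i ≤ j → c j ≤ c i) (hc' : ∀ i j : Fin k, i ≤ j → c' j ≤ c' i)
    (h : Multiset.map c Finset.univ.val = Multiset.map c' Finset.univ.val) : c = c' := by
  haveI : IsAntisymm ℕ (· ≥ ·) := ⟨fun a b h1 h2 => le_antisymm h2 h1⟩
  have huniv : (Finset.univ.val : Multiset (Fin k)) = ↑(List.finRange k) := rfl
  rw [huniv] at h
  have h2 : (List.map c (List.finRange k) : Multiset ℕ) = ↑(List.map c' (List.finRange k)) := by
    simpa using h
  have hperm : List.Perm (List.map c (List.finRange k)) (List.map c' (List.finRange k)) :=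
    Multiset.coe_eq_coe.1 h2
  have hs1 : List.Pairwise (· ≥ ·) (List.map c (List.finRange k)) := by
    rw [List.pairwise_map]
    exact (List.pairwise_lt_finRange k).imp (fun hij => hc _ _ (le_of_lt hij))
  have hs2 : List.Pairwise (· ≥ ·) (List.map c' (List.finRange k)) := by
    rw [List.pairwise_map]
    exact (List.pairwise_lt_finRange k).imp (fun hij => hc' _ _ (le_of_lt hij))
  have heq := List.Perm.eq_of_pairwise' hs1 hs2 hperm
  funext i
  have : ∀ a ∈ List.finRange k, c a = c' a := List.map_inj_left.1 heq
  exact this i (List.mem_finRange i)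


lemma cpart_injective {k : ℕ} (f : Fin k → ℕ) : Function.Injective (cpart f) := by
  intro i j hij
  rcases lt_trichotomy i j with h | h | h
  · exact absurd hij.symm (ne_of_lt (cpart_lt f h))
  · exact h
  · exact absurd hij (ne_of_lt (cpart_lt f h))

lemma cpart_anti {k : ℕ} (f : Fin k → ℕ) : ∀ i j : Fin k, i ≤ j → cpart f j ≤ cpart f i := by
  intro i j hij
  rcases eq_or_lt_of_le hij with rfl | h
  · exact le_refl _
  · exact le_of_lt (cpart_lt f h)

lemma f_of_cpart {k : ℕ} {f f' : Fin k → ℕ} (h : cpart f = cpart f') : f = f' := by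
  have hS : ∀ j : Fin k, S f j.1 = S f' j.1 := by
    intro j
    have := congrFun h j
    unfold cpart at this
    have hj := j.2
    omega
  funext i
  have h1 := S_step f i
  have h2 := S_step f' i
  rw [hS i] at h1
  by_cases hc : i.1+1 < k
  · have h3 := hS ⟨i.1+1, hc⟩
    simp only at h3
    omega
  · have hk : i.1+1 = k := by have := i.2; omega
    rw [hk, S_top] at h1
    rw [hk, S_top] at h2
    omega

lemma g_of_lpart {l : ℕ} {g g' : Fin l → ℕ} (h : lpart g = lpart g') : g = g' := by
  have hS : ∀ j : Fin l, S g j.1 = S g' j.1 := fun j => congrFun h j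
  funext i
  have h1 := S_step g i
  have h2 := S_step g' i
  rw [hS i] at h1
  by_cases hc : i.1+1 < l
  · have h3 := hS ⟨i.1+1, hc⟩
    simp only at h3
    omega
  · have hk : i.1+1 = l := by have := i.2; omega
    rw [hk, S_top] at h1
    rw [hk, S_top] at h2
    omega

def nu {l : ℕ} (g : Fin l → ℕ) : Multiset ℕ :=
  Multiset.filter (fun x => 0 < x) (Multiset.map (lpart g) Finset.univ.val)

lemma nufull_eq {l : ℕ} (g : Fin l → ℕ) :
    Multiset.map (lpart g) Finset.univ.val = nu g + Multiset.replicate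
      (Multiset.card (Multiset.filter (fun x => ¬ 0 < x) (Multiset.map (lpart g) Finset.univ.val))) 0 := by
  have h := Multiset.filter_add_not (fun x => 0 < x) (Multiset.map (lpart g) Finset.univ.val)
  have hrep : Multiset.filter (fun x => ¬ 0 < x) (Multiset.map (lpart g) Finset.univ.val)
      = Multiset.replicate
        (Multiset.card (Multiset.filter (fun x => ¬ 0 < x) (Multiset.map (lpart g) Finset.univ.val))) 0 := by
    apply Multiset.eq_replicate_card.2
    intro b hb
    have := Multiset.of_mem_filter hb
    omega
  conv_lhs => rw [← h]
  rw [← hrep]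
  rfl

lemma g_of_nu {l : ℕ} {g g' : Fin l → ℕ} (h : nu g = nu g') : g = g' := by
  have hcard : Multiset.card (Multiset.filter (fun x => ¬ 0 < x) (Multiset.map (lpart g) Finset.univ.val))
      = Multiset.card (Multiset.filter (fun x => ¬ 0 < x) (Multiset.map (lpart g') Finset.univ.val)) := by
    have h1 := congrArg Multiset.card (Multiset.filter_add_not (fun x => 0 < x) (Multiset.map (lpart g) Finset.univ.val))
    have h2 := congrArg Multiset.card (Multiset.filter_add_not (fun x => 0 < x) (Multiset.map (lpart g') Finset.univ.val))
    rw [Multiset.card_add] at h1 h2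
    rw [Multiset.card_map] at h1 h2
    rw [show Multiset.filter (fun x => 0 < x) (Multiset.map (lpart g) Finset.univ.val) = nu g from rfl] at h1
    rw [show Multiset.filter (fun x => 0 < x) (Multiset.map (lpart g') Finset.univ.val) = nu g' from rfl] at h2
    rw [h] at h1
    omega
  have hfull : Multiset.map (lpart g) Finset.univ.val = Multiset.map (lpart g') Finset.univ.val := by
    rw [nufull_eq g, nufull_eq g', h, hcard]
  exact g_of_lpart (funeq_of_map_eq (fun i j hij => lpart_anti g hij) (fun i j hij => lpart_anti g' hij) hfull)

lemma f_of_mu {k : ℕ} {f f' : Fin k → ℕ}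
    (h : Multiset.map (cpart f) Finset.univ.val = Multiset.map (cpart f') Finset.univ.val) : f = f' :=
  f_of_cpart (funeq_of_map_eq (cpart_anti f) (cpart_anti f') h)

lemma sum_ksub (k : ℕ) : (∑ i : Fin k, (k - i.1)) * 2 = k*(k+1) := by
  rw [Fin.sum_univ_eq_sum_range (fun i => k - i)]
  induction k with
  | zero => simp
  | succ k ih =>
    rw [Finset.sum_range_succ]
    have hc : ∑ i ∈ Finset.range k, (k + 1 - i) = (∑ i ∈ Finset.range k, (k - i)) + k := by
      have h1 : ∑ i ∈ Finset.range k, (k + 1 - i) = ∑ i ∈ Finset.range k, ((k - i) + 1) := by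
        refine Finset.sum_congr rfl fun i hi => ?_
        have := Finset.mem_range.1 hi
        omega
      rw [h1, Finset.sum_add_distrib, Finset.sum_const, Finset.card_range, smul_eq_mul, mul_one]
    have hexp : (k+1)*(k+1+1) = k*(k+1) + 2*(k+1) := by ring
    omega


def mu {k : ℕ} (f : Fin k → ℕ) : Multiset ℕ := Multiset.map (cpart f) Finset.univ.val

lemma count_mu_le {k : ℕ} (f : Fin k → ℕ) (a : ℕ) : Multiset.count a (mu f) ≤ 1 := by
  classical
  rw [mu, Multiset.count_map]
  have hval : Multiset.filter (fun i => a = cpart f i) Finset.univ.val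
      = (Finset.filter (fun i => a = cpart f i) Finset.univ).val := (Finset.filter_val _ _).symm
  rw [hval]
  show (Finset.filter (fun i => a = cpart f i) Finset.univ).card ≤ 1
  apply Finset.card_le_one.2
  intro i hi j hj
  have hi' := (Finset.mem_filter.1 hi).2
  have hj' := (Finset.mem_filter.1 hj).2
  exact cpart_injective f (hi' ▸ hj')

lemma mu_sum {k M : ℕ} {f : Fin k → ℕ} (hf : f ∈ E k M) :
    (mu f).sum * 2 = 2*M + k*(k+1) := by
  have h1 : (mu f).sum = ∑ i : Fin k, cpart f i := by
    rw [mu]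
    rfl
  have h2 : ∑ i : Fin k, cpart f i = (∑ i : Fin k, S f i.1) + ∑ i : Fin k, (k - i.1) := by
    rw [← Finset.sum_add_distrib]
    rfl
  rw [h1, h2, sum_S, mem_E.1 hf, Nat.add_mul, sum_ksub]
  ring

lemma nu_sum {l L : ℕ} {g : Fin l → ℕ} (hg : g ∈ E l L) : (nu g).sum = L := by
  have h := Multiset.filter_add_not (fun x => 0 < x) (Multiset.map (lpart g) Finset.univ.val)
  have hz : (Multiset.filter (fun x => ¬ 0 < x) (Multiset.map (lpart g) Finset.univ.val)).sum = 0 := by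
    apply Multiset.sum_eq_zero
    intro x hx
    have := Multiset.of_mem_filter hx
    omega
  have htot : (Multiset.map (lpart g) Finset.univ.val).sum = L := by
    have : (Multiset.map (lpart g) Finset.univ.val).sum = ∑ i : Fin l, lpart g i := rfl
    rw [this]
    have : ∑ i : Fin l, lpart g i = ∑ i : Fin l, S g i.1 := rfl
    rw [this, sum_S, mem_E.1 hg]
  have hsplit := congrArg Multiset.sum h
  rw [Multiset.sum_add, hz, add_zero, htot] at hsplit
  exact hsplit

lemma card_mul_le (k l M L n : ℕ) (hn : 2*n = 2*M + k*(k+1) + 4*L) :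
    (E k M).card * (E l L).card ≤ Fintype.card (Nat.Partition n) := by
  classical
  have hsum : ∀ (p : {f // f ∈ E k M} × {g // g ∈ E l L}),
      (mu p.1.1 + (nu p.2.1 + nu p.2.1)).sum = n := by
    intro p
    rw [Multiset.sum_add, Multiset.sum_add]
    have h1 := mu_sum p.1.2
    have h2 := nu_sum p.2.2
    omega
  have hpos : ∀ (p : {f // f ∈ E k M} × {g // g ∈ E l L}) {x : ℕ},
      x ∈ mu p.1.1 + (nu p.2.1 + nu p.2.1) → 0 < x := by
    intro p x hx
    rcases Multiset.mem_add.1 hx with hx | hx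
    · rcases Multiset.mem_map.1 hx with ⟨i, _, rfl⟩
      have : i.1 < k := i.2
      unfold cpart
      omega
    · rcases Multiset.mem_add.1 hx with hx | hx <;> exact Multiset.of_mem_filter hx
  let θ : {f // f ∈ E k M} × {g // g ∈ E l L} → Nat.Partition n := fun p =>
    { parts := mu p.1.1 + (nu p.2.1 + nu p.2.1)
      parts_pos := fun hx => hpos p hx
      parts_sum := hsum p }
  have hinj : Function.Injective θ := by
    intro p q h
    have hparts : mu p.1.1 + (nu p.2.1 + nu p.2.1) = mu q.1.1 + (nu q.2.1 + nu q.2.1) :=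
      congrArg Nat.Partition.parts h
    have hcnt : ∀ a : ℕ, Multiset.count a (mu p.1.1) = Multiset.count a (mu q.1.1)
        ∧ Multiset.count a (nu p.2.1) = Multiset.count a (nu q.2.1) := by
      intro a
      have := congrArg (Multiset.count a) hparts
      rw [Multiset.count_add, Multiset.count_add, Multiset.count_add, Multiset.count_add] at this
      have h1 := count_mu_le p.1.1 a
      have h2 := count_mu_le q.1.1 a
      omega
    have hmu : mu p.1.1 = mu q.1.1 := Multiset.ext.2 fun a => (hcnt a).1
    have hnu : nu p.2.1 = nu q.2.1 := Multiset.ext.2 fun a => (hcnt a).2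
    have hf : p.1.1 = q.1.1 := f_of_mu hmu
    have hg : p.2.1 = q.2.1 := g_of_nu hnu
    exact Prod.ext (Subtype.ext hf) (Subtype.ext hg)
  calc (E k M).card * (E l L).card
      = Fintype.card ({f // f ∈ E k M} × {g // g ∈ E l L}) := by
        rw [Fintype.card_prod, Fintype.card_coe, Fintype.card_coe]
    _ ≤ Fintype.card (Nat.Partition n) := Fintype.card_le_of_injective θ hinj



lemma fact_le (k : ℕ) (hk : 1 ≤ k) :
    (k.factorial : ℝ) * Real.exp ((k:ℝ) - 1) ≤ (k:ℝ)^(k+1) := by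
  induction k, hk using Nat.le_induction with
  | base => simp
  | succ k hk ih =>
    have hkpos : (0:ℝ) < k := by exact_mod_cast hk
    have hk1pos : (0:ℝ) < (k:ℝ)+1 := by positivity
    -- exp(1/(k+1)) ≤ (k+1)/k
    have he : Real.exp (1/((k:ℝ)+1)) ≤ ((k:ℝ)+1)/k := by
      have h1 : 1 - 1/((k:ℝ)+1) ≤ Real.exp (-(1/((k:ℝ)+1))) := by
        have := Real.add_one_le_exp (-(1/((k:ℝ)+1)))
        linarith
      have h2 : (k:ℝ)/((k:ℝ)+1) ≤ Real.exp (-(1/((k:ℝ)+1))) := by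
        have : (k:ℝ)/((k:ℝ)+1) = 1 - 1/((k:ℝ)+1) := by field_simp; ring
        linarith [this ▸ h1]
      have h3 : (0:ℝ) < (k:ℝ)/((k:ℝ)+1) := by positivity
      have h4 : Real.exp (1/((k:ℝ)+1)) = 1 / Real.exp (-(1/((k:ℝ)+1))) := by
        rw [Real.exp_neg]
        field_simp
      rw [h4]
      rw [div_le_div_iff₀ (by positivity) hkpos]
      have h5 := mul_le_mul_of_nonneg_left h2 (le_of_lt hkpos)
      calc (1:ℝ) * k = k := by ring
        _ = ((k:ℝ)+1) * ((k:ℝ)/((k:ℝ)+1)) := by field_simp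
        _ ≤ ((k:ℝ)+1) * Real.exp (-(1/((k:ℝ)+1))) := by
            apply mul_le_mul_of_nonneg_left h2 (le_of_lt hk1pos)
        _ = Real.exp (-(1/((k:ℝ)+1))) * ((k:ℝ)+1) := by ring
        _ = ((k:ℝ)+1) * Real.exp (-(1/((k:ℝ)+1))) := by ring
    -- e ≤ ((k+1)/k)^(k+1)
    have hee : Real.exp 1 ≤ (((k:ℝ)+1)/k)^(k+1) := by
      have h0 : Real.exp 1 = (Real.exp (1/((k:ℝ)+1)))^(k+1) := by
        rw [← Real.exp_nat_mul]
        congr 1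
        field_simp
        exact (Nat.cast_succ k).symm
      rw [h0]
      exact pow_le_pow_left₀ (le_of_lt (Real.exp_pos _)) he _
    have hkey : Real.exp 1 * (k:ℝ)^(k+1) ≤ ((k:ℝ)+1)^(k+1) := by
      have h6 : (((k:ℝ)+1)/k)^(k+1) * (k:ℝ)^(k+1) = ((k:ℝ)+1)^(k+1) := by
        rw [div_pow]
        field_simp
      calc Real.exp 1 * (k:ℝ)^(k+1) ≤ (((k:ℝ)+1)/k)^(k+1) * (k:ℝ)^(k+1) :=
            mul_le_mul_of_nonneg_right hee (by positivity)
        _ = ((k:ℝ)+1)^(k+1) := h6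
    have hexp : Real.exp ((↑(k+1):ℝ) - 1) = Real.exp ((k:ℝ)-1) * Real.exp 1 := by
      rw [← Real.exp_add]
      congr 1
      push_cast
      ring
    have hfact : ((k+1).factorial : ℝ) = ((k:ℝ)+1) * k.factorial := by
      rw [Nat.factorial_succ]
      push_cast
      ring
    calc ((k+1).factorial : ℝ) * Real.exp ((↑(k+1):ℝ) - 1)
        = ((k:ℝ)+1) * ((k.factorial : ℝ) * Real.exp ((k:ℝ)-1)) * Real.exp 1 := by
          rw [hfact, hexp]; ring
      _ ≤ ((k:ℝ)+1) * (k:ℝ)^(k+1) * Real.exp 1 := by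
          apply mul_le_mul_of_nonneg_right _ (le_of_lt (Real.exp_pos _))
          exact mul_le_mul_of_nonneg_left ih (by positivity)
      _ = ((k:ℝ)+1) * (Real.exp 1 * (k:ℝ)^(k+1)) := by ring
      _ ≤ ((k:ℝ)+1) * ((k:ℝ)+1)^(k+1) := mul_le_mul_of_nonneg_left hkey (by positivity)
      _ = (↑(k+1):ℝ)^(k+1+1) := by push_cast; ring

lemma exp_poly (k : ℕ) (hk : 200 ≤ k) :
    Real.exp 8 * (k:ℝ)^8 ≤ (7/5 : ℝ)^(k-1) := by
  have hk0 : (0:ℝ) ≤ (k:ℝ) := Nat.cast_nonneg k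
  have h75 : Real.exp (1/3 : ℝ) ≤ 7/5 := by
    by_contra hcon
    push_neg at hcon
    have h3 : ((7:ℝ)/5)^(3:ℕ) < (Real.exp ((1:ℝ)/3))^(3:ℕ) := by
      apply pow_lt_pow_left₀ hcon (by norm_num)
      norm_num
    have h4 : (Real.exp ((1:ℝ)/3))^(3:ℕ) = Real.exp 1 := by
      rw [← Real.exp_nat_mul]
      norm_num
    have h5 := Real.exp_one_lt_d9
    rw [h4] at h3
    norm_num at h3
    linarith
  have hstep1 : (k:ℝ) ≤ 100 * Real.exp ((k:ℝ)/100) := by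
    have h := Real.add_one_le_exp ((k:ℝ)/100)
    nlinarith [Real.exp_pos ((k:ℝ)/100)]
  have h100 : (100:ℝ) ≤ Real.exp 4.8 := by
    have h1 : Real.exp (4.8:ℝ) = (Real.exp 1)^(4:ℕ) * (Real.exp (0.4:ℝ))^(2:ℕ) := by
      rw [← Real.exp_nat_mul, ← Real.exp_nat_mul, ← Real.exp_add]
      norm_num
    have h2 := Real.exp_one_gt_d9
    have h3 : (1.4:ℝ) ≤ Real.exp (0.4:ℝ) := by
      have := Real.add_one_le_exp (0.4:ℝ)
      linarith
    rw [h1]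
    have h2' : (2.7182818283:ℝ)^(4:ℕ) ≤ (Real.exp 1)^(4:ℕ) :=
      pow_le_pow_left₀ (by norm_num) (le_of_lt h2) _
    have h3' : ((1.4:ℝ))^(2:ℕ) ≤ (Real.exp (0.4:ℝ))^(2:ℕ) :=
      pow_le_pow_left₀ (by norm_num) h3 _
    calc (100:ℝ) ≤ (2.7182818283:ℝ)^(4:ℕ) * ((1.4:ℝ))^(2:ℕ) := by norm_num
      _ ≤ (Real.exp 1)^(4:ℕ) * (Real.exp (0.4:ℝ))^(2:ℕ) := by
          apply mul_le_mul h2' h3' (by norm_num) (by positivity)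
  have hk' : (k:ℝ) ≤ Real.exp 4.8 * Real.exp ((k:ℝ)/100) := by
    calc (k:ℝ) ≤ 100 * Real.exp ((k:ℝ)/100) := hstep1
      _ ≤ Real.exp 4.8 * Real.exp ((k:ℝ)/100) :=
          mul_le_mul_of_nonneg_right h100 (le_of_lt (Real.exp_pos _))
  have hk8 : (k:ℝ)^(8:ℕ) ≤ Real.exp (38.4 + 8*(k:ℝ)/100) := by
    calc (k:ℝ)^(8:ℕ) ≤ (Real.exp 4.8 * Real.exp ((k:ℝ)/100))^(8:ℕ) :=
          pow_le_pow_left₀ hk0 hk' 8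
      _ = Real.exp (38.4 + 8*(k:ℝ)/100) := by
          rw [← Real.exp_add, ← Real.exp_nat_mul]
          norm_num
          ring_nf
  have hcast : ((k-1 : ℕ) : ℝ) = (k:ℝ) - 1 := by
    have : 1 ≤ k := by omega
    push_cast [this]
    ring
  have hfinal : Real.exp (8 + (38.4 + 8*(k:ℝ)/100)) ≤ Real.exp (((k-1:ℕ):ℝ) * (1/3)) := by
    apply Real.exp_le_exp.2
    rw [hcast]
    have : (200:ℝ) ≤ (k:ℝ) := by exact_mod_cast hk
    linarith
  calc Real.exp 8 * (k:ℝ)^8 ≤ Real.exp 8 * Real.exp (38.4 + 8*(k:ℝ)/100) :=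
        mul_le_mul_of_nonneg_left hk8 (le_of_lt (Real.exp_pos _))
    _ = Real.exp (8 + (38.4 + 8*(k:ℝ)/100)) := (Real.exp_add _ _).symm
    _ ≤ Real.exp (((k-1:ℕ):ℝ) * (1/3)) := hfinal
    _ = (Real.exp (1/3))^(k-1) := Real.exp_nat_mul _ _
    _ ≤ (7/5 : ℝ)^(k-1) := pow_le_pow_left₀ (le_of_lt (Real.exp_pos _)) h75 _


lemma AB_bound (x a b kr : ℝ) (hx : 1000 ≤ x)
    (hA' : 3*x*x - 6*x ≤ 8*a) (hB' : x*x - 2*x - 3 ≤ 4*b)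
    (hk : 2*kr ≤ x) (hk0 : 0 ≤ kr) (ha0 : 0 ≤ a) :
    (7/5:ℝ)*kr^4 ≤ a*b := by
  have hBpos : (0:ℝ) ≤ x*x - 2*x - 3 := by nlinarith
  have hmul : (3*x*x - 6*x) * (x*x - 2*x - 3) ≤ (8*a) * (4*b) :=
    mul_le_mul hA' hB' hBpos (by linarith)
  have hk4 : 16*kr^4 ≤ x^4 := by
    have h0 : (0:ℝ) ≤ 2*kr := by linarith
    have h1 : (2*kr)*(2*kr) ≤ x*x := mul_self_le_mul_self h0 hk
    have h2 : ((2*kr)*(2*kr))*((2*kr)*(2*kr)) ≤ (x*x)*(x*x) :=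
      mul_self_le_mul_self (by positivity) h1
    nlinarith [h2]
  have hs0 : (0:ℝ) ≤ x := by linarith
  have hcube : (0:ℝ) ≤ x*x*x*(x-60) :=
    mul_nonneg (mul_nonneg (mul_nonneg hs0 hs0) hs0) (by linarith)
  nlinarith [hmul, hk4, hcube]


lemma analytic (k : ℕ) (hk200 : 200 ≤ k)
    (a b F KF x rn : ℝ)
    (hF0 : 0 ≤ F) (hKF0 : 0 ≤ KF)
    (hFKF : F ≤ KF^2)
    (hfact : KF * Real.exp ((k:ℝ)-1) ≤ (k:ℝ)^(k+1))
    (hrn0 : 0 ≤ rn)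
    (hsqrt : Real.sqrt rn ≤ x + 1)
    (hsk : x ≤ 2*(k:ℝ)+1)
    (h7k4 : (7/5:ℝ)*(k:ℝ)^4 ≤ a*b) :
    Real.exp (2*Real.sqrt rn) * F^2 ≤ a^(k-1) * b^(k-1) := by
  have hk0 : (0:ℝ) ≤ (k:ℝ) := Nat.cast_nonneg _
  have hexp1 : Real.exp (2*Real.sqrt rn) ≤ Real.exp (2*x+2) :=
    Real.exp_le_exp.2 (by linarith)
  have hFK4 : F^2 ≤ KF^4 := by nlinarith [hFKF, hF0, hKF0, sq_nonneg KF, sq_nonneg (KF^2)]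
  have he4 : (Real.exp ((k:ℝ)-1))^(4:ℕ) = Real.exp (4*((k:ℝ)-1)) := by
    rw [← Real.exp_nat_mul]
    norm_num
  have hKE : (KF * Real.exp ((k:ℝ)-1))^(4:ℕ) ≤ ((k:ℝ)^(k+1))^(4:ℕ) :=
    pow_le_pow_left₀ (by positivity) hfact 4
  have hKE2 : KF^4 * Real.exp (4*((k:ℝ)-1)) ≤ (k:ℝ)^(4*(k+1)) := by
    have hlhs : (KF * Real.exp ((k:ℝ)-1))^(4:ℕ) = KF^4 * Real.exp (4*((k:ℝ)-1)) := by
      rw [mul_pow, he4]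
    have hrhs : ((k:ℝ)^(k+1))^(4:ℕ) = (k:ℝ)^(4*(k+1)) := by
      rw [← pow_mul]
      ring_nf
    rw [hlhs, hrhs] at hKE
    exact hKE
  have hsplit : (k:ℝ)^(4*(k+1)) = (k:ℝ)^(4*(k-1)) * (k:ℝ)^8 := by
    rw [← pow_add]
    congr 1
    omega
  have hexp2 : Real.exp (2*x+2) ≤ Real.exp 8 * Real.exp (4*((k:ℝ)-1)) := by
    rw [← Real.exp_add]
    apply Real.exp_le_exp.2
    have : (200:ℝ) ≤ (k:ℝ) := by exact_mod_cast hk200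
    linarith
  have hpow75 : ((7/5:ℝ)*(k:ℝ)^4)^(k-1) = (7/5:ℝ)^(k-1) * (k:ℝ)^(4*(k-1)) := by
    rw [mul_pow, ← pow_mul]
  calc Real.exp (2*Real.sqrt rn) * F^2
      ≤ Real.exp (2*x+2) * KF^4 :=
        mul_le_mul hexp1 hFK4 (by positivity) (le_of_lt (Real.exp_pos _))
    _ ≤ (Real.exp 8 * Real.exp (4*((k:ℝ)-1))) * KF^4 :=
        mul_le_mul_of_nonneg_right hexp2 (by positivity)
    _ = Real.exp 8 * (KF^4 * Real.exp (4*((k:ℝ)-1))) := by ring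
    _ ≤ Real.exp 8 * (k:ℝ)^(4*(k+1)) :=
        mul_le_mul_of_nonneg_left hKE2 (le_of_lt (Real.exp_pos _))
    _ = (Real.exp 8 * (k:ℝ)^8) * (k:ℝ)^(4*(k-1)) := by rw [hsplit]; ring
    _ ≤ (7/5:ℝ)^(k-1) * (k:ℝ)^(4*(k-1)) :=
        mul_le_mul_of_nonneg_right (exp_poly k hk200) (by positivity)
    _ = ((7/5:ℝ)*(k:ℝ)^4)^(k-1) := hpow75.symm
    _ ≤ (a*b)^(k-1) := pow_le_pow_left₀ (by positivity) h7k4 _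
    _ = a^(k-1) * b^(k-1) := mul_pow _ _ _

theorem main :
    ∃ N : ℕ, ∀ n : ℕ, N ≤ n →
      Real.exp (2 * Real.sqrt n) ≤ Fintype.card (Nat.Partition n) := by
  use 1000000
  intro n hn
  set s := Nat.sqrt n with hs
  set k := s/2 with hkdef
  set L := n/4 with hLdef
  set D := k*(k+1)/2 with hDdef
  have hs2 : s*s ≤ n := Nat.sqrt_le n
  have hs2' : n < (s+1)*(s+1) := Nat.lt_succ_sqrt n
  have hs1000 : 1000 ≤ s := Nat.le_sqrt.2 (by omega)
  have hks1 : 2*k ≤ s := by omega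
  have hks2 : s ≤ 2*k+1 := by omega
  have hkk : 4*(k*k) ≤ s*s := by
    calc 4*(k*k) = 2*k*(2*k) := by ring
      _ ≤ s*s := Nat.mul_le_mul hks1 hks1
  have hsn : 1000*s ≤ n := le_trans (Nat.mul_le_mul_right s hs1000) hs2
  have h2D : 2*D = k*k + k := by
    have hev : k*(k+1) = k*k + k := by ring
    have hpar : k*(k+1) % 2 = 0 := Nat.even_iff.1 (Nat.even_mul_succ_self k)
    omega
  have hDL : D + 2*L ≤ n := by omega
  set M := n - D - 2*L with hMdef
  have hMeq : M + D + 2*L = n := by omega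
  have hn2 : 2*n = 2*M + k*(k+1) + 4*L := by
    have hev : k*(k+1) = k*k + k := by ring
    omega
  have hk200 : 200 ≤ k := by omega
  have hk1 : 1 ≤ k := by omega
  have hMk : k ≤ M := by omega
  have hLk : k ≤ L := by omega
  set A := M - k with hAdef
  set B := L - k with hBdef
  have hA8 : 3*n ≤ 8*A + 6*s := by omega
  have hB4 : n ≤ 4*B + 2*s + 3 := by omega
  -- Nat card bounds
  have hB1 : A^(k-1) ≤ (k-1).factorial * k.factorial * ((E k M).card) := by
    have h := cardB (k-1) M
    have hkk1 : k - 1 + 1 = k := by omega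
    rw [hkk1] at h
    exact h
  have hB2 : B^(k-1) ≤ (k-1).factorial * k.factorial * ((E k L).card) := by
    have h := cardB (k-1) L
    have hkk1 : k - 1 + 1 = k := by omega
    rw [hkk1] at h
    exact h
  have hcards := card_mul_le k k M L n hn2
  have hprodN : A^(k-1)*B^(k-1) ≤ ((k-1).factorial * k.factorial)^2 * ((E k M).card * (E k L).card) := by
    calc A^(k-1)*B^(k-1)
        ≤ ((k-1).factorial * k.factorial * (E k M).card) * ((k-1).factorial * k.factorial * (E k L).card) :=
          Nat.mul_le_mul hB1 hB2
      _ = ((k-1).factorial * k.factorial)^2 * ((E k M).card * (E k L).card) := by ring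
  -- real versions
  have hprodR : (A:ℝ)^(k-1)*(B:ℝ)^(k-1) ≤
      (((k-1).factorial * k.factorial : ℕ):ℝ)^2 * (((E k M).card * (E k L).card : ℕ):ℝ) := by
    have h := (Nat.cast_le (α := ℝ)).2 hprodN
    push_cast at h ⊢
    convert h using 2
  have haR : 3*(n:ℝ) ≤ 8*(A:ℝ) + 6*(s:ℝ) := by exact_mod_cast hA8
  have hbR : (n:ℝ) ≤ 4*(B:ℝ) + 2*(s:ℝ) + 3 := by exact_mod_cast hB4
  have hkR : 2*(k:ℝ) ≤ (s:ℝ) := by exact_mod_cast hks1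
  have hsR : (1000:ℝ) ≤ (s:ℝ) := by exact_mod_cast hs1000
  have hx2 : (s:ℝ)*(s:ℝ) ≤ (n:ℝ) := by exact_mod_cast hs2
  have h7k4 : (7/5:ℝ)*(k:ℝ)^4 ≤ (A:ℝ)*(B:ℝ) := by
    apply AB_bound (s:ℝ) (A:ℝ) (B:ℝ) (k:ℝ) hsR (by linarith) (by linarith) hkR
      (Nat.cast_nonneg _) (Nat.cast_nonneg _)
  have hFKF : (((k-1).factorial * k.factorial : ℕ):ℝ) ≤ ((k.factorial : ℕ):ℝ)^2 := by
    have h1 : (k-1).factorial * k.factorial ≤ k.factorial * k.factorial :=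
      Nat.mul_le_mul_right _ (Nat.factorial_le (by omega))
    have h2 : k.factorial * k.factorial = (k.factorial)^2 := by ring
    rw [h2] at h1
    exact_mod_cast h1
  have hsqrtR : Real.sqrt (n:ℝ) ≤ (s:ℝ) + 1 := by
    have h1 : (n:ℝ) ≤ ((s:ℝ)+1)*((s:ℝ)+1) := by exact_mod_cast le_of_lt hs2'
    have h2 : ((s:ℝ)+1)*((s:ℝ)+1) = ((s:ℝ)+1)^2 := by ring
    calc Real.sqrt (n:ℝ) ≤ Real.sqrt (((s:ℝ)+1)^2) := Real.sqrt_le_sqrt (by linarith)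
      _ = (s:ℝ)+1 := Real.sqrt_sq (by positivity)
  have hskR : (s:ℝ) ≤ 2*(k:ℝ)+1 := by exact_mod_cast hks2
  have hT := analytic k hk200 (A:ℝ) (B:ℝ)
    (((k-1).factorial * k.factorial : ℕ):ℝ) ((k.factorial : ℕ):ℝ) (s:ℝ) (n:ℝ)
    (Nat.cast_nonneg _) (Nat.cast_nonneg _) hFKF (fact_le k hk1)
    (Nat.cast_nonneg _) hsqrtR hskR h7k4
  -- conclude
  have hF1 : (1:ℝ) ≤ (((k-1).factorial * k.factorial : ℕ):ℝ) := by
    have : 1 ≤ (k-1).factorial * k.factorial :=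
      Nat.one_le_iff_ne_zero.2 (Nat.mul_ne_zero (k-1).factorial_ne_zero k.factorial_ne_zero)
    exact_mod_cast this
  have hF2pos : (0:ℝ) < (((k-1).factorial * k.factorial : ℕ):ℝ)^2 := by positivity
  have hchain : Real.exp (2*Real.sqrt (n:ℝ)) * (((k-1).factorial * k.factorial : ℕ):ℝ)^2 ≤
      (((E k M).card * (E k L).card : ℕ):ℝ) * (((k-1).factorial * k.factorial : ℕ):ℝ)^2 := by
    calc Real.exp (2*Real.sqrt (n:ℝ)) * (((k-1).factorial * k.factorial : ℕ):ℝ)^2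
        ≤ (A:ℝ)^(k-1)*(B:ℝ)^(k-1) := hT
      _ ≤ (((k-1).factorial * k.factorial : ℕ):ℝ)^2 * (((E k M).card * (E k L).card : ℕ):ℝ) := hprodR
      _ = (((E k M).card * (E k L).card : ℕ):ℝ) * (((k-1).factorial * k.factorial : ℕ):ℝ)^2 := by ring
  have hstep : Real.exp (2*Real.sqrt (n:ℝ)) ≤ (((E k M).card * (E k L).card : ℕ):ℝ) :=
    le_of_mul_le_mul_right hchain hF2pos
  have hXP : (((E k M).card * (E k L).card : ℕ):ℝ) ≤ (Fintype.card (Nat.Partition n) : ℝ) := by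
    exact_mod_cast hcards
  linarith

end PLB

/-- For sufficiently large `k`, the number of partitions of `k` satisfies
`p(k) ≥ e^{2√k}`. -/
theorem stmt_14 :
    ∃ N : ℕ, ∀ k : ℕ, N ≤ k →
      Real.exp (2 * Real.sqrt k) ≤ Fintype.card (Nat.Partition k) := PLB.main
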